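/- (No-miss condition via a hyper-node) Let U ⊆ V_H be a hyper-node with boundary edge set E_U, and let l ∈ E_U ∩ F be a failed link. Define D̃_{U,e} := Σ_{u∈U} D̃_{u,e}. Suppose (1) D̃_{U,e} D̃_{U,l} > 0 for all e, l ∈ E_U ∩ F, (2) S_U = ∅, i.e., there is no operational boundary edge e with D̃_{U,e} of the same sign as the failed boundary edges, and (3) f_{U,g} + (η-1)|D̃_{U,l}| < 0, where f_{U,g} = Σ_{u∈U} g_{D,u} if D̃_{U,l} < 0 and Σ_{u∈U} g_{D,-u} otherwise. Then there exists z ≥ 0 satisfying the alternative system [A_D^T, A_x^T, W^T, 1] z = 0 and [g_D^T, g_x^T, g_w^T, 0] z < 0 for Q_m = {l}, Q_f = ∅; consequently l is detected by the LP-based algorithm. -/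
import Mathlib

open Matrix Finset

def EUb {V E : Type*} [Fintype E] [DecidableEq V] (ends : E → V × V) (U : Finset V) :
    Finset E :=
  Finset.univ.filter (fun e =>
    ((ends e).1 ∈ U ∧ (ends e).2 ∉ U) ∨ ((ends e).2 ∈ U ∧ (ends e).1 ∉ U))

noncomputable def dtU {V E : Type*} (Dt : Matrix V E ℝ) (U : Finset V) (e : E) : ℝ :=
  ∑ u ∈ U, Dt u e

lemma dtU_zero {V E : Type*} [Fintype E] [DecidableEq V] (ends : E → V × V)
    (Dt : Matrix V E ℝ)
    (hD0 : ∀ u e, u ≠ (ends e).1 → u ≠ (ends e).2 → Dt u e = 0)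
    (hskew : ∀ e, Dt (ends e).1 e = - Dt (ends e).2 e)
    (U : Finset V) (e : E) (he : e ∉ EUb ends U) : dtU Dt U e = 0 := by
  simp only [EUb, Finset.mem_filter, Finset.mem_univ, true_and, not_or, not_and,
    not_not] at he
  obtain ⟨h1, h2⟩ := he
  by_cases hab : (ends e).1 = (ends e).2
  · have ha0 : Dt (ends e).1 e = 0 := by
      have := hskew e; rw [← hab] at this; linarith
    apply Finset.sum_eq_zero
    intro u hu
    by_cases hua : u = (ends e).1
    · rw [hua]; exact ha0
    · exact hD0 u e hua (fun h => hua (h.trans hab.symm))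
  · by_cases haU : (ends e).1 ∈ U
    · have hbU : (ends e).2 ∈ U := h1 haU
      have hc : dtU Dt U e = ∑ u ∈ U,
          ((if u = (ends e).1 then Dt (ends e).1 e else 0)
            + (if u = (ends e).2 then Dt (ends e).2 e else 0)) := by
        apply Finset.sum_congr rfl
        intro u _
        by_cases hua : u = (ends e).1
        · subst hua; simp [hab]
        · by_cases hub : u = (ends e).2
          · subst hub
            have hba : (ends e).2 ≠ (ends e).1 := fun h => hab h.symm
            simp [hba]
          · simp [hua, hub, hD0 u e hua hub]
      rw [hc, Finset.sum_add_distrib, Finset.sum_ite_eq' U (ends e).1,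
        Finset.sum_ite_eq' U (ends e).2]
      simp [haU, hbU, hskew e]
    · have hbU : (ends e).2 ∉ U := fun h => haU (h2 h)
      apply Finset.sum_eq_zero
      intro u hu
      exact hD0 u e (fun h => haU (h ▸ hu)) (fun h => hbU (h ▸ hu))

theorem stmt10 {V E : Type*} [Fintype V] [DecidableEq V] [Fintype E] [DecidableEq E]
    (ends : E → V × V) (Dt : Matrix V E ℝ)
    (hD0 : ∀ u e, u ≠ (ends e).1 → u ≠ (ends e).2 → Dt u e = 0)
    (hskew : ∀ e, Dt (ends e).1 e = - Dt (ends e).2 e)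
    (F : Finset E) (gD gDm : V → ℝ) (η : ℝ) (hη : 0 < η ∧ η < 1)
    (U : Finset V) (l : E) (hlU : l ∈ EUb ends U) (hlF : l ∈ F)
    (hcond1 : ∀ e ∈ EUb ends U ∩ F, ∀ l' ∈ EUb ends U ∩ F,
      dtU Dt U e * dtU Dt U l' > 0)
    (hcond2 : ∀ e ∈ EUb ends U, e ∉ F → ∀ l' ∈ EUb ends U ∩ F,
      ¬ (dtU Dt U l' * dtU Dt U e > 0))
    (hcond3 : (if dtU Dt U l < 0 then ∑ u ∈ U, gD u else ∑ u ∈ U, gDm u)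
        + (η - 1) * |dtU Dt U l| < 0) :
    ∃ (zD zDm : V → ℝ) (zxm zxp : E → ℝ) (zw zs : ℝ),
      (∀ u, 0 ≤ zD u) ∧ (∀ u, 0 ≤ zDm u) ∧ (∀ e, 0 ≤ zxm e) ∧ (∀ e, 0 ≤ zxp e) ∧
      0 ≤ zw ∧ 0 ≤ zs ∧
      (∀ e, (∑ u, Dt u e * (zD u - zDm u)) + (zxp e - zxm e)
          + (if e = l then zw else 0) + zs = 0) ∧
      ((∑ u, (gD u * zD u + gDm u * zDm u))
        + (∑ e, (zxp e * (1 - (if e ∈ F then (1 : ℝ) else 0))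
            + zxm e * (if e ∈ F then (1 : ℝ) else 0)))
        + (η - 1) * zw < 0) := by
  classical
  have hlEF : l ∈ EUb ends U ∩ F := Finset.mem_inter.mpr ⟨hlU, hlF⟩
  have hdl2 : dtU Dt U l * dtU Dt U l > 0 := hcond1 l hlEF l hlEF
  have hdl : dtU Dt U l ≠ 0 := by
    intro h; rw [h] at hdl2; simp at hdl2
  set s : ℝ := if dtU Dt U l < 0 then 1 else -1 with hs
  refine ⟨fun u => if u ∈ U ∧ dtU Dt U l < 0 then 1 else 0,
    fun u => if u ∈ U ∧ ¬ dtU Dt U l < 0 then 1 else 0,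
    fun e => if e ∈ EUb ends U ∧ e ∉ F then s * dtU Dt U e else 0,
    fun e => if e ∈ EUb ends U ∧ e ∈ F ∧ e ≠ l then -(s * dtU Dt U e) else 0,
    |dtU Dt U l|, 0,
    fun u => by positivity, fun u => by positivity, ?_, ?_,
    abs_nonneg _, le_refl 0, ?_, ?_⟩
  · -- zxm nonneg
    intro e
    dsimp only
    by_cases he : e ∈ EUb ends U ∧ e ∉ F
    · rw [if_pos he]
      have h2 := hcond2 e he.1 he.2 l hlEF
      push_neg at h2
      by_cases hc : dtU Dt U l < 0
      · rw [hs, if_pos hc]; nlinarith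
      · have hpos : 0 < dtU Dt U l := lt_of_le_of_ne (not_lt.mp hc) (Ne.symm hdl)
        rw [hs, if_neg hc]; nlinarith
    · rw [if_neg he]
  · -- zxp nonneg
    intro e
    dsimp only
    by_cases he : e ∈ EUb ends U ∧ e ∈ F ∧ e ≠ l
    · rw [if_pos he]
      have h1 := hcond1 e (Finset.mem_inter.mpr ⟨he.1, he.2.1⟩) l hlEF
      by_cases hc : dtU Dt U l < 0
      · rw [hs, if_pos hc]; nlinarith
      · have hpos : 0 < dtU Dt U l := lt_of_le_of_ne (not_lt.mp hc) (Ne.symm hdl)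
        rw [hs, if_neg hc]; nlinarith
    · rw [if_neg he]
  · -- equations
    intro e
    dsimp only
    have hsum : (∑ u, Dt u e * ((if u ∈ U ∧ dtU Dt U l < 0 then (1:ℝ) else 0)
        - (if u ∈ U ∧ ¬ dtU Dt U l < 0 then 1 else 0))) = s * dtU Dt U e := by
      have hterm : ∀ u, Dt u e * ((if u ∈ U ∧ dtU Dt U l < 0 then (1:ℝ) else 0)
          - (if u ∈ U ∧ ¬ dtU Dt U l < 0 then 1 else 0))
          = if u ∈ U then s * Dt u e else 0 := by
        intro u
        by_cases hu : u ∈ U <;> by_cases hc : dtU Dt U l < 0 <;>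
          simp [hu, hc, hs] <;> ring
      rw [Finset.sum_congr rfl (fun u _ => hterm u), Finset.sum_ite_mem,
        Finset.univ_inter, dtU, Finset.mul_sum]
    rw [hsum]
    by_cases hel : e = l
    · have heF : e ∈ F := hel ▸ hlF
      rw [if_pos hel, if_neg (by simp [hel]), if_neg (by simp [heF]), hel]
      by_cases hc : dtU Dt U l < 0
      · rw [hs, if_pos hc, abs_of_neg hc]; ring
      · have hpos : 0 < dtU Dt U l := lt_of_le_of_ne (not_lt.mp hc) (Ne.symm hdl)
        rw [hs, if_neg hc, abs_of_pos hpos]; ring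
    · rw [if_neg hel]
      by_cases heU : e ∈ EUb ends U
      · by_cases heF : e ∈ F
        · rw [if_pos ⟨heU, heF, hel⟩, if_neg (by simp [heF])]; ring
        · rw [if_neg (fun h => heF h.2.1), if_pos ⟨heU, heF⟩]; ring
      · have hde : dtU Dt U e = 0 := dtU_zero ends Dt hD0 hskew U e heU
        rw [if_neg (by simp [heU]), if_neg (by simp [heU]), hde]; ring
  · -- cost
    dsimp only
    have h2 : (∑ e, ((if e ∈ EUb ends U ∧ e ∈ F ∧ e ≠ l then -(s * dtU Dt U e) else 0)
          * (1 - (if e ∈ F then (1 : ℝ) else 0))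
        + (if e ∈ EUb ends U ∧ e ∉ F then s * dtU Dt U e else 0)
          * (if e ∈ F then (1 : ℝ) else 0))) = 0 := by
      apply Finset.sum_eq_zero
      intro e _
      by_cases heF : e ∈ F <;> simp [heF]
    rw [h2]
    have h1 : (∑ u, (gD u * (if u ∈ U ∧ dtU Dt U l < 0 then (1:ℝ) else 0)
        + gDm u * (if u ∈ U ∧ ¬ dtU Dt U l < 0 then 1 else 0)))
        = (if dtU Dt U l < 0 then ∑ u ∈ U, gD u else ∑ u ∈ U, gDm u) := by
      by_cases hc : dtU Dt U l < 0 <;>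
        simp [hc, mul_ite, mul_one, mul_zero, Finset.sum_ite_mem, Finset.univ_inter]
    rw [h1]
    linarith [hcond3]
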